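/- For every α ∈ (π/3, π) there exists an equilateral spherical triangle with angle α, i.e., a spherical triangle (x,y,z) whose three angles at the vertices x, y, z are all equal to α. -/

import Mathlib

/-- ℝ³ with the Euclidean inner product. -/
noncomputable abbrev E3 := EuclideanSpace ℝ (Fin 3)

/-- The unit tangent vector at `x` in the direction of `y`:
`x_y = (y - ⟨x,y⟩x)/‖y - ⟨x,y⟩x‖`. -/
noncomputable def sideUnit (x y : E3) : E3 :=
  ‖y - (inner ℝ x y : ℝ) • x‖⁻¹ • (y - (inner ℝ x y : ℝ) • x)

/-- The angle of the spherical triangle `(x,y,z)` at the vertex `x`. -/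
noncomputable def vertexAngle (x y z : E3) : ℝ :=
  Real.arccos (inner ℝ (sideUnit x y) (sideUnit x z) : ℝ)

/-- If three unit vectors have all pairwise inner products equal to `t ∈ (-1,1)`,
then the vertex angle at the first one is `arccos (t / (1 + t))`. -/
lemma vertexAngle_of_gram (x y z : E3) (t : ℝ) (hx : ‖x‖ = 1) (hy : ‖y‖ = 1) (hz : ‖z‖ = 1)
    (hxy : (inner ℝ x y : ℝ) = t) (hxz : (inner ℝ x z : ℝ) = t) (hyz : (inner ℝ y z : ℝ) = t)
    (h1 : -1 < t) (h2 : t < 1) :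
    vertexAngle x y z = Real.arccos (t / (1 + t)) := by
  have hts : 0 < 1 - t ^ 2 := by nlinarith
  have hnu : ‖y - t • x‖ ^ 2 = 1 - t ^ 2 := by
    rw [norm_sub_sq_real, real_inner_smul_right, real_inner_comm, hxy, norm_smul]
    simp [hy, hx, abs_mul_abs_self]
    ring
  have hnv : ‖z - t • x‖ ^ 2 = 1 - t ^ 2 := by
    rw [norm_sub_sq_real, real_inner_smul_right, real_inner_comm, hxz, norm_smul]
    simp [hz, hx, abs_mul_abs_self]
    ring
  have hu : ‖y - t • x‖ = Real.sqrt (1 - t ^ 2) := by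
    rw [← hnu, Real.sqrt_sq (norm_nonneg _)]
  have hv : ‖z - t • x‖ = Real.sqrt (1 - t ^ 2) := by
    rw [← hnv, Real.sqrt_sq (norm_nonneg _)]
  have huv : (inner ℝ (y - t • x) (z - t • x) : ℝ) = t - t ^ 2 := by
    rw [real_inner_comm y x] at hxy
    simp only [inner_sub_left, inner_sub_right, real_inner_smul_left, real_inner_smul_right,
      real_inner_self_eq_norm_sq, hxy, hxz, hyz, hx, norm_smul, Real.norm_eq_abs]
    rw [mul_pow, sq_abs]
    ring
  unfold vertexAngle sideUnit
  rw [hxy, hxz, real_inner_smul_left, real_inner_smul_right, huv, hu, hv]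
  congr 1
  have hs : Real.sqrt (1 - t ^ 2) * Real.sqrt (1 - t ^ 2) = 1 - t ^ 2 :=
    Real.mul_self_sqrt hts.le
  have hne : Real.sqrt (1 - t ^ 2) ≠ 0 := by positivity
  have h1t : (1 : ℝ) + t ≠ 0 := by linarith
  have e1 : (Real.sqrt (1 - t ^ 2))⁻¹ * ((Real.sqrt (1 - t ^ 2))⁻¹ * (t - t ^ 2))
      = (t - t ^ 2) / (1 - t ^ 2) := by
    rw [← hs]; field_simp
    rw [Real.sqrt_sq (Real.sqrt_nonneg _)]
  rw [e1, div_eq_div_iff hts.ne' h1t]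
  ring

set_option maxHeartbeats 1000000 in
/-- for every `α ∈ (π/3, π)` there exists an equilateral spherical
triangle all of whose angles equal `α`. -/
theorem equilateral_spherical_triangle_exists (α : ℝ)
    (hα : α ∈ Set.Ioo (Real.pi / 3) Real.pi) :
    ∃ x y z : E3, ‖x‖ = 1 ∧ ‖y‖ = 1 ∧ ‖z‖ = 1 ∧
      LinearIndependent ℝ ![x, y, z] ∧
      vertexAngle x y z = α ∧ vertexAngle y z x = α ∧ vertexAngle z x y = α := by
  obtain ⟨hα1, hα2⟩ := hα
  have hπ := Real.pi_pos
  have hα0 : 0 < α := lt_trans (by positivity) hα1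
  set c := Real.cos α with hc
  have hc1 : c < 1 / 2 := by
    have := Real.cos_lt_cos_of_nonneg_of_le_pi (by positivity) hα2.le hα1
    rw [Real.cos_pi_div_three] at this
    exact this
  have hc2 : -1 < c := by
    have := Real.cos_lt_cos_of_nonneg_of_le_pi hα0.le le_rfl hα2
    rw [Real.cos_pi] at this
    exact this
  have h1c : (0 : ℝ) < 1 - c := by linarith
  set t := c / (1 - c) with ht
  have htc : t / (1 + t) = c := by
    have h1pt : 1 + t = 1 / (1 - c) := by rw [ht]; field_simp; ring
    rw [h1pt, ht, div_div_div_cancel_right₀]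
    · simp
    · exact h1c.ne'
    
  have ht1 : t < 1 := by rw [ht, div_lt_one h1c]; linarith
  have ht2 : -(1 / 2) < t := by rw [ht, lt_div_iff₀ h1c]; linarith
  have ht3 : -1 < t := by linarith
  have hr0 : (0 : ℝ) < 2 * (1 - t) / 3 := by linarith
  have hh0 : (0 : ℝ) < (1 + 2 * t) / 3 := by linarith
  set r := Real.sqrt (2 * (1 - t) / 3) with hrdef
  set h := Real.sqrt ((1 + 2 * t) / 3) with hhdef
  have hr : 0 < r := Real.sqrt_pos.mpr hr0
  have hh : 0 < h := Real.sqrt_pos.mpr hh0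
  have hr2 : r ^ 2 = 2 * (1 - t) / 3 := Real.sq_sqrt hr0.le
  have hh2 : h ^ 2 = (1 + 2 * t) / 3 := Real.sq_sqrt hh0.le
  have hs3 : Real.sqrt 3 ^ 2 = 3 := Real.sq_sqrt (by norm_num)
  set x : E3 := (WithLp.equiv 2 (Fin 3 → ℝ)).symm ![r, 0, h] with hxdef
  set y : E3 := (WithLp.equiv 2 (Fin 3 → ℝ)).symm ![-(r/2), r * Real.sqrt 3 / 2, h] with hydef
  set z : E3 := (WithLp.equiv 2 (Fin 3 → ℝ)).symm ![-(r/2), -(r * Real.sqrt 3 / 2), h] with hzdef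
  have ixx : (inner ℝ x x : ℝ) = 1 := by
    rw [hxdef, PiLp.inner_apply]
    simp [PiLp.inner_apply, RCLike.inner_apply, Fin.sum_univ_three]
    linear_combination hr2 + hh2
  have iyy : (inner ℝ y y : ℝ) = 1 := by
    rw [hydef, PiLp.inner_apply]
    simp [PiLp.inner_apply, RCLike.inner_apply, Fin.sum_univ_three]
    linear_combination (1 : ℝ) * hr2 + hh2 + (r ^ 2 / 4) * hs3
  have izz : (inner ℝ z z : ℝ) = 1 := by
    rw [hzdef, PiLp.inner_apply]
    simp [PiLp.inner_apply, RCLike.inner_apply, Fin.sum_univ_three]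
    linear_combination (1 : ℝ) * hr2 + hh2 + (r ^ 2 / 4) * hs3
  have ixy : (inner ℝ x y : ℝ) = t := by
    rw [hxdef, hydef]
    simp [PiLp.inner_apply, RCLike.inner_apply, Fin.sum_univ_three]
    linear_combination (-(1 : ℝ) / 2) * hr2 + hh2
  have ixz : (inner ℝ x z : ℝ) = t := by
    rw [hxdef, hzdef]
    simp [PiLp.inner_apply, RCLike.inner_apply, Fin.sum_univ_three]
    linear_combination (-(1 : ℝ) / 2) * hr2 + hh2
  have iyz : (inner ℝ y z : ℝ) = t := by
    rw [hydef, hzdef]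
    simp [PiLp.inner_apply, RCLike.inner_apply, Fin.sum_univ_three]
    linear_combination (-(1 : ℝ) / 2) * hr2 + hh2 + (-(r ^ 2) / 4) * hs3
  have hnx : ‖x‖ = 1 := by
    have h2 : ‖x‖ ^ 2 = 1 := by rw [← real_inner_self_eq_norm_sq]; exact ixx
    nlinarith [norm_nonneg x]
  have hny : ‖y‖ = 1 := by
    have h2 : ‖y‖ ^ 2 = 1 := by rw [← real_inner_self_eq_norm_sq]; exact iyy
    nlinarith [norm_nonneg y]
  have hnz : ‖z‖ = 1 := by
    have h2 : ‖z‖ ^ 2 = 1 := by rw [← real_inner_self_eq_norm_sq]; exact izz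
    nlinarith [norm_nonneg z]
  have harccos : Real.arccos (t / (1 + t)) = α := by
    rw [htc, hc, Real.arccos_cos hα0.le hα2.le]
  refine ⟨x, y, z, hnx, hny, hnz, ?_, ?_, ?_, ?_⟩
  · have hA : IsUnit (Matrix.of ![![r, 0, h], ![-(r/2), r * Real.sqrt 3 / 2, h],
        ![-(r/2), -(r * Real.sqrt 3 / 2), h]]) := by
      rw [Matrix.isUnit_iff_isUnit_det, isUnit_iff_ne_zero, Matrix.det_fin_three]
      simp only [Matrix.of_apply, Matrix.cons_val', Matrix.cons_val_zero, Matrix.empty_val',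
        Matrix.cons_val_fin_one, Matrix.cons_val_one, Matrix.head_cons, Matrix.head_fin_const,
        Matrix.cons_val_two, Matrix.tail_cons]
      have hs : (0 : ℝ) < Real.sqrt 3 := by positivity
      intro hzero
      nlinarith [mul_pos hs (mul_pos (mul_pos hr hr) hh)]
    rw [hxdef, hydef, hzdef]
    have hli := (Matrix.linearIndependent_rows_iff_isUnit.mpr hA).map'
      (WithLp.linearEquiv 2 ℝ (Fin 3 → ℝ)).symm.toLinearMap (LinearEquiv.ker _)
    convert hli using 1
    funext i; fin_cases i <;> rfl
    rfl
  · rw [vertexAngle_of_gram x y z t hnx hny hnz ixy ixz iyz ht3 ht1, harccos]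
  · rw [vertexAngle_of_gram y z x t hny hnz hnx iyz
      (by rw [real_inner_comm]; exact ixy) (by rw [real_inner_comm]; exact ixz) ht3 ht1, harccos]
  · rw [vertexAngle_of_gram z x y t hnz hnx hny
      (by rw [real_inner_comm]; exact ixz) (by rw [real_inner_comm]; exact iyz) ixy ht3 ht1,
      harccos]
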